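/- (Polar-coordinate bounds in the dissipative zone, non-negative dissipation.) Assume (A1): σ₀ admits an absolutely convergent Fourier expansion with A₁ < ∞; (A3) for η; and σ₀(η) ≥ 0 for all η. Let λ > 0 and v₀, v₁ ∈ ℝ. Let (ρ₁, θ₁) and (ρ₂, θ₂) be C¹ solutions on [0,∞) of the system ρ′ = −b(t) ρ sin²θ, θ′ = −λ − b(t) sin θ cos θ, with positive ρⱼ, and initial data ρ₁(0) = λ|v₀|, θ₁(0) = 0 if v₀ ≥ 0 and θ₁(0) = π if v₀ < 0; ρ₂(0) = |v₁|, θ₂(0) = π/2 if v₁ ≥ 0 and θ₂(0) = −π/2 if v₁ < 0. Then for all t ≥ 0: ρ₁(t)² ≤ λ²|v₀|², and ρ₂(t)² ≤ e^{2B₀} ((1+t)^{−2m} + λ² γ(t;m)²) |v₁|², where γ(t;m) := ∫₀ᵗ (1+s)^{−m} ds. -/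

import Mathlib

open Set Filter

lemma myAntitoneOn {f f' : ℝ → ℝ} {D : Set ℝ} (hD : Convex ℝ D)
    (hd : ∀ t ∈ D, HasDerivAt f (f' t) t) (h0 : ∀ t ∈ interior D, f' t ≤ 0) :
    AntitoneOn f D := by
  apply antitoneOn_of_deriv_nonpos hD
  · exact fun t ht => (hd t ht).continuousAt.continuousWithinAt
  · exact fun t ht => ((hd t (interior_subset ht)).differentiableAt).differentiableWithinAt
  · intro t ht; rw [(hd t (interior_subset ht)).deriv]; exact h0 t ht

lemma myMonotoneOn {f f' : ℝ → ℝ} {D : Set ℝ} (hD : Convex ℝ D)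
    (hd : ∀ t ∈ D, HasDerivAt f (f' t) t) (h0 : ∀ t ∈ interior D, 0 ≤ f' t) :
    MonotoneOn f D := by
  apply monotoneOn_of_deriv_nonneg hD
  · exact fun t ht => (hd t ht).continuousAt.continuousWithinAt
  · exact fun t ht => ((hd t (interior_subset ht)).differentiableAt).differentiableWithinAt
  · intro t ht; rw [(hd t (interior_subset ht)).deriv]; exact h0 t ht

lemma myStrictMonoOn {f f' : ℝ → ℝ} {D : Set ℝ} (hD : Convex ℝ D)
    (hd : ∀ t ∈ D, HasDerivAt f (f' t) t) (h0 : ∀ t ∈ interior D, 0 < f' t) :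
    StrictMonoOn f D := by
  apply strictMonoOn_of_deriv_pos hD
  · exact fun t ht => (hd t ht).continuousAt.continuousWithinAt
  · intro t ht; rw [(hd t (interior_subset ht)).deriv]; exact h0 t ht

/-- Polar-coordinate bounds in the dissipative zone, non-negative dissipation. -/
theorem polar_bounds_dissipative_zone
    (T m A₁ : ℝ) (hT : 0 < T)
    (α β : ℕ → ℝ) (σ₀ : ℝ → ℝ)
    (hσ₀cont : Continuous σ₀)
    (hσ₀per : Function.Periodic σ₀ (2 * T))
    (hσ₀nonneg : ∀ x : ℝ, 0 ≤ σ₀ x)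
    (hsum : Summable fun n : ℕ => |α (n + 1)| + |β (n + 1)|)
    (hA₁ : A₁ = ∑' n : ℕ, (|α (n + 1)| + |β (n + 1)|))
    (hmean : m = 1 / (2 * T) * ∫ s in (-T)..T, σ₀ s)
    (hFourier : ∀ x : ℝ, σ₀ x = m + ∑' n : ℕ,
      (α (n + 1) * Real.cos (((n : ℝ) + 1) * Real.pi * x / T)
        + β (n + 1) * Real.sin (((n : ℝ) + 1) * Real.pi * x / T)))
    (η η' η'' : ℝ → ℝ)
    (hη0 : 0 ≤ η 0)
    (hηd : ∀ t, 0 ≤ t → HasDerivAt η (η' t) t)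
    (hηd' : ∀ t, 0 ≤ t → HasDerivAt η' (η'' t) t)
    (hη'pos : ∀ t, 0 ≤ t → 0 < η' t)
    (hη''pos : ∀ t, 0 ≤ t → 0 < η'' t)
    (B₀ : ℝ)
    (hB₀ : ∀ τm τp : ℝ, 0 ≤ τm → τm ≤ τp →
      |∫ s in τm..τp, (σ₀ (η s) - m) / (1 + s)| ≤ B₀)
    (lam v₀ v₁ : ℝ) (hlam : 0 < lam)
    (ρ₁ ρ₁' θ₁ θ₁' ρ₂ ρ₂' θ₂ θ₂' : ℝ → ℝ)
    (hρ₁pos : ∀ t, 0 ≤ t → 0 < ρ₁ t) (hρ₂pos : ∀ t, 0 ≤ t → 0 < ρ₂ t)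
    (hρ₁d : ∀ t, 0 ≤ t → HasDerivAt ρ₁ (ρ₁' t) t)
    (hθ₁d : ∀ t, 0 ≤ t → HasDerivAt θ₁ (θ₁' t) t)
    (hρ₂d : ∀ t, 0 ≤ t → HasDerivAt ρ₂ (ρ₂' t) t)
    (hθ₂d : ∀ t, 0 ≤ t → HasDerivAt θ₂ (θ₂' t) t)
    (hρ₁eq : ∀ t, 0 ≤ t →
      ρ₁' t = -(σ₀ (η t) / (1 + t)) * ρ₁ t * Real.sin (θ₁ t) ^ 2)
    (hθ₁eq : ∀ t, 0 ≤ t →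
      θ₁' t = -lam - σ₀ (η t) / (1 + t) * Real.sin (θ₁ t) * Real.cos (θ₁ t))
    (hρ₂eq : ∀ t, 0 ≤ t →
      ρ₂' t = -(σ₀ (η t) / (1 + t)) * ρ₂ t * Real.sin (θ₂ t) ^ 2)
    (hθ₂eq : ∀ t, 0 ≤ t →
      θ₂' t = -lam - σ₀ (η t) / (1 + t) * Real.sin (θ₂ t) * Real.cos (θ₂ t))
    (hρ₁0 : ρ₁ 0 = lam * |v₀|)
    (hθ₁0 : θ₁ 0 = if 0 ≤ v₀ then 0 else Real.pi)
    (hρ₂0 : ρ₂ 0 = |v₁|)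
    (hθ₂0 : θ₂ 0 = if 0 ≤ v₁ then Real.pi / 2 else -(Real.pi / 2)) :
    ∀ t, 0 ≤ t →
      ρ₁ t ^ 2 ≤ lam ^ 2 * v₀ ^ 2 ∧
      ρ₂ t ^ 2 ≤ Real.exp (2 * B₀) *
        ((1 + t) ^ (-(2 * m)) + lam ^ 2 * (∫ s in (0:ℝ)..t, (1 + s) ^ (-m)) ^ 2) * v₁ ^ 2 := by
  -- ### generic facts
  have h1pos : ∀ s : ℝ, 0 ≤ s → (0:ℝ) < 1 + s := fun s hs => by linarith
  have hbnn : ∀ s : ℝ, 0 ≤ s → 0 ≤ σ₀ (η s) / (1 + s) :=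
    fun s hs => div_nonneg (hσ₀nonneg _) (h1pos s hs).le
  -- ### antitonicity of ρ₁, ρ₂
  have hanti : ∀ (ρ ρ' θ : ℝ → ℝ), (∀ t, 0 ≤ t → HasDerivAt ρ (ρ' t) t) →
      (∀ t, 0 ≤ t → 0 < ρ t) →
      (∀ t, 0 ≤ t → ρ' t = -(σ₀ (η t) / (1 + t)) * ρ t * Real.sin (θ t) ^ 2) →
      AntitoneOn ρ (Ici 0) := by
    intro ρ ρ' θ hd hpos heq
    apply myAntitoneOn (convex_Ici 0) (fun t ht => hd t ht)
    intro t ht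
    rw [interior_Ici, mem_Ioi] at ht
    rw [heq t ht.le]
    have h1 := hbnn t ht.le
    have h2 := (hpos t ht.le).le
    linarith [mul_nonneg (mul_nonneg h1 h2) (sq_nonneg (Real.sin (θ t)))]
  have hρ₁anti := hanti ρ₁ ρ₁' θ₁ hρ₁d hρ₁pos hρ₁eq
  have hρ₂anti := hanti ρ₂ ρ₂' θ₂ hρ₂d hρ₂pos hρ₂eq
  -- ### the extended damping coefficient
  set bt : ℝ → ℝ := fun u => σ₀ (η (max u 0)) / (1 + max u 0) with hbt
  have hmaxnn : ∀ u : ℝ, (0:ℝ) ≤ max u 0 := fun u => le_max_right u 0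
  have h1max : ∀ u : ℝ, (0:ℝ) < 1 + max u 0 := fun u => h1pos _ (hmaxnn u)
  have hηmax : Continuous fun u : ℝ => η (max u 0) := by
    rw [continuous_iff_continuousAt]
    intro u
    exact ContinuousAt.comp (g := η) (f := fun u : ℝ => max u 0)
      (hηd (max u 0) (hmaxnn u)).continuousAt
      ((continuous_id.max continuous_const).continuousAt)
  have hbtcont : Continuous bt :=
    (hσ₀cont.comp hηmax).div (continuous_const.add (continuous_id.max continuous_const))
      (fun u => (h1max u).ne')
  have hbts : ∀ s : ℝ, 0 ≤ s → bt s = σ₀ (η s) / (1 + s) := by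
    intro s hs; simp only [hbt, max_eq_left hs]
  have hbtnn : ∀ s : ℝ, 0 ≤ bt s :=
    fun s => div_nonneg (hσ₀nonneg _) (h1max s).le
  -- ### D, S, γ
  set D : ℝ → ℝ := fun s => ∫ u in (0:ℝ)..s, bt u with hD
  set S : ℝ → ℝ := fun s => ∫ u in (0:ℝ)..s, (σ₀ (η u) - m) / (1 + u) with hS
  set γ : ℝ → ℝ := fun s => ∫ u in (0:ℝ)..s, (1 + u) ^ (-m) with hγ
  have hDd : ∀ s : ℝ, HasDerivAt D (bt s) s :=
    fun s => (hbtcont.integral_hasStrictDerivAt 0 s).hasDerivAt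
  have hγint : ∀ a b : ℝ, 0 ≤ a → a ≤ b →
      IntervalIntegrable (fun u : ℝ => (1 + u) ^ (-m)) MeasureTheory.volume a b := by
    intro a b ha hab
    apply ContinuousOn.intervalIntegrable
    rw [uIcc_of_le hab]
    apply ContinuousOn.rpow_const ((continuous_const.add continuous_id).continuousOn)
    intro u hu
    exact Or.inl (h1pos u (le_trans ha hu.1)).ne'
  have hγnn : ∀ s : ℝ, 0 ≤ s → 0 ≤ γ s := by
    intro s hs
    exact intervalIntegral.integral_nonneg hs
      (fun u hu => Real.rpow_nonneg (h1pos u hu.1).le _)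
  have hγmono : ∀ a b : ℝ, 0 ≤ a → a ≤ b → γ a ≤ γ b := by
    intro a b ha hab
    have hadd := intervalIntegral.integral_add_adjacent_intervals
      (hγint 0 a le_rfl ha) (hγint a b ha hab)
    have hnn : 0 ≤ ∫ u in a..b, (1 + u) ^ (-m) :=
      intervalIntegral.integral_nonneg hab
        (fun u hu => Real.rpow_nonneg (h1pos u (le_trans ha hu.1)).le _)
    simp only [hγ]
    linarith [hadd, hnn]
  -- ### exp(-D s) ≤ exp B₀ * (1+s)^(-m)
  have hDsplit : ∀ s : ℝ, 0 ≤ s → Real.exp (-D s) ≤ Real.exp B₀ * (1 + s) ^ (-m) := by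
    intro s hs
    have hcont1 : ContinuousOn (fun u : ℝ => (σ₀ (η (max u 0)) - m) / (1 + max u 0)) (Icc 0 s) :=
      (((hσ₀cont.comp hηmax).sub continuous_const).div
        (continuous_const.add (continuous_id.max continuous_const))
        (fun u => (h1max u).ne')).continuousOn
    have hint1 : IntervalIntegrable (fun u : ℝ => (σ₀ (η (max u 0)) - m) / (1 + max u 0))
        MeasureTheory.volume 0 s := by
      apply ContinuousOn.intervalIntegrable; rw [uIcc_of_le hs]; exact hcont1
    have hint2 : IntervalIntegrable (fun u : ℝ => m / (1 + max u 0))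
        MeasureTheory.volume 0 s := by
      apply ContinuousOn.intervalIntegrable
      exact (continuous_const.div (continuous_const.add (continuous_id.max continuous_const))
        (fun u => (h1max u).ne')).continuousOn
    have hsplit : D s = (∫ u in (0:ℝ)..s, (σ₀ (η (max u 0)) - m) / (1 + max u 0))
        + ∫ u in (0:ℝ)..s, m / (1 + max u 0) := by
      rw [← intervalIntegral.integral_add hint1 hint2]
      apply intervalIntegral.integral_congr
      intro u _
      simp only [hbt, ← add_div, sub_add_cancel]
    have hSeq : (∫ u in (0:ℝ)..s, (σ₀ (η (max u 0)) - m) / (1 + max u 0)) = S s := by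
      apply intervalIntegral.integral_congr
      intro u hu
      rw [uIcc_of_le hs] at hu
      simp only [max_eq_left hu.1]
    have hlogeq : (∫ u in (0:ℝ)..s, m / (1 + max u 0)) = m * Real.log (1 + s) := by
      have hftc : ∀ u ∈ uIcc (0:ℝ) s,
          HasDerivAt (fun w : ℝ => m * Real.log (1 + w)) (m / (1 + max u 0)) u := by
        intro u hu
        rw [uIcc_of_le hs] at hu
        have h1 : HasDerivAt (fun w : ℝ => 1 + w) 1 u := by
          simpa using (hasDerivAt_id u).const_add (1:ℝ)
        have h2 := (h1.log (h1pos u hu.1).ne').const_mul m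
        rw [max_eq_left hu.1]
        refine h2.congr_deriv ?_
        ring
      rw [intervalIntegral.integral_eq_sub_of_hasDerivAt hftc hint2]
      simp
    have habs : |S s| ≤ B₀ := hB₀ 0 s le_rfl hs
    have hDval : D s = S s + m * Real.log (1 + s) := by rw [hsplit, hSeq, hlogeq]
    have hrpow : (1 + s) ^ (-m) = Real.exp (-(m * Real.log (1 + s))) := by
      rw [Real.rpow_def_of_pos (h1pos s hs)]
      ring_nf
    rw [hDval, neg_add, Real.exp_add, hrpow]
    apply mul_le_mul_of_nonneg_right _ (Real.exp_pos _).le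
    rw [Real.exp_le_exp]
    linarith [neg_le_abs (S s)]
  -- ### v₁ ≠ 0 and the shifted angle
  set c : ℝ := if 0 ≤ v₁ then 0 else Real.pi with hc
  set x : ℝ → ℝ := fun s => ρ₂ s * Real.cos (θ₂ s + c) with hxdef
  set y : ℝ → ℝ := fun s => ρ₂ s * Real.sin (θ₂ s + c) with hydef
  have hx0 : x 0 = 0 := by
    simp only [hxdef, hθ₂0, hc]
    by_cases h : 0 ≤ v₁
    · simp [h]
    · rw [if_neg h, if_neg h, (by ring : -(Real.pi/2) + Real.pi = Real.pi/2),
        Real.cos_pi_div_two, mul_zero]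
  have hy0 : y 0 = |v₁| := by
    simp only [hydef, hθ₂0, hc]
    by_cases h : 0 ≤ v₁
    · simp [h, hρ₂0]
    · rw [if_neg h, if_neg h, (by ring : -(Real.pi/2) + Real.pi = Real.pi/2),
        Real.sin_pi_div_two, mul_one, hρ₂0]
  have hy0pos : 0 < y 0 := by
    rw [hy0, ← hρ₂0]; exact hρ₂pos 0 le_rfl
  have hxd : ∀ s, 0 ≤ s → HasDerivAt x (lam * y s) s := by
    intro s hs
    have hd := (hρ₂d s hs).mul (((hθ₂d s hs).add_const c).cos)
    refine hd.congr_deriv ?_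
    symm
    rw [hρ₂eq s hs, hθ₂eq s hs]
    simp only [hydef, hc]
    by_cases h : 0 ≤ v₁
    · simp only [if_pos h, add_zero]; ring
    · simp only [if_neg h, Real.sin_add_pi, Real.cos_add_pi]; ring
  have hyd : ∀ s, 0 ≤ s → HasDerivAt y (-lam * x s - bt s * y s) s := by
    intro s hs
    have hd := (hρ₂d s hs).mul (((hθ₂d s hs).add_const c).sin)
    refine hd.congr_deriv ?_
    symm
    rw [hρ₂eq s hs, hθ₂eq s hs, hbts s hs]
    have pyth := Real.sin_sq_add_cos_sq (θ₂ s)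
    simp only [hxdef, hydef, hc]
    by_cases h : 0 ≤ v₁
    · simp only [if_pos h, add_zero]
      linear_combination (σ₀ (η s) / (1 + s) * ρ₂ s * Real.sin (θ₂ s)) * pyth
    · simp only [if_neg h, Real.sin_add_pi, Real.cos_add_pi]
      linear_combination (-(σ₀ (η s) / (1 + s) * ρ₂ s * Real.sin (θ₂ s))) * pyth
  have hycont : ∀ s : ℝ, 0 ≤ s → ContinuousAt y s := fun s hs => (hyd s hs).continuousAt
  have hρ₂sq : ∀ s : ℝ, ρ₂ s ^ 2 = x s ^ 2 + y s ^ 2 := by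
    intro s
    have pyth := Real.sin_sq_add_cos_sq (θ₂ s + c)
    simp only [hxdef, hydef]
    linear_combination (-(ρ₂ s ^ 2)) * pyth
  -- IVT helper
  have hIVT : ∀ s : ℝ, 0 ≤ s → y s < 0 → ∃ r, 0 ≤ r ∧ r ≤ s ∧ y r = 0 := by
    intro s hs hneg
    have hcont : ContinuousOn y (Icc 0 s) := fun u hu => (hycont u hu.1).continuousWithinAt
    have h0mem : (0:ℝ) ∈ Icc (y s) (y 0) := ⟨hneg.le, hy0pos.le⟩
    obtain ⟨r, hr, hyr⟩ := intermediate_value_Icc' hs hcont h0mem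
    exact ⟨r, hr.1, hr.2, hyr⟩
  -- ### the zero set of y is nonempty
  have hZne : {s : ℝ | 0 ≤ s ∧ y s = 0}.Nonempty := by
    by_contra hne
    rw [Set.not_nonempty_iff_eq_empty] at hne
    have hne' : ∀ s : ℝ, 0 ≤ s → y s ≠ 0 := by
      intro s hs h
      have hmem : s ∈ {s : ℝ | 0 ≤ s ∧ y s = 0} := ⟨hs, h⟩
      rw [hne] at hmem
      exact hmem
    have ypos : ∀ s, 0 ≤ s → 0 < y s := by
      intro s hs
      rcases lt_trichotomy (y s) 0 with h | h | h
      · obtain ⟨r, hr0, _, hyr⟩ := hIVT s hs h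
        exact absurd hyr (hne' r hr0)
      · exact absurd h (hne' s hs)
      · exact h
    have hxmono : StrictMonoOn x (Ici 0) := by
      apply myStrictMonoOn (convex_Ici 0) (fun s hs => hxd s hs)
      intro s hs
      rw [interior_Ici, mem_Ioi] at hs
      exact mul_pos hlam (ypos s hs.le)
    have hx1 : 0 < x 1 := by
      have := hxmono (self_mem_Ici) (mem_Ici.2 zero_le_one) zero_lt_one
      rwa [hx0] at this
    have hy1 := ypos 1 zero_le_one
    obtain ⟨M, hM⟩ : ∃ M : ℝ, M = 1 + (y 1 + 1) / (lam * x 1) := ⟨_, rfl⟩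
    have hlx : 0 < lam * x 1 := mul_pos hlam hx1
    have hM1 : 1 ≤ M := by
      rw [hM]
      exact le_add_of_nonneg_right (div_nonneg (by linarith) hlx.le)
    have hanti2 : AntitoneOn (fun s => y s + lam * x 1 * s) (Icc 1 M) := by
      apply myAntitoneOn (convex_Icc 1 M)
        (f' := fun s => (-lam * x s - bt s * y s) + lam * x 1)
      · intro s hs
        have hs0 : (0:ℝ) ≤ s := le_trans zero_le_one hs.1
        exact (hyd s hs0).add (by simpa using (hasDerivAt_id s).const_mul (lam * x 1))
      · intro s hs
        rw [interior_Icc] at hs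
        have hs0 : (0:ℝ) ≤ s := le_trans zero_le_one hs.1.le
        have hxx : x 1 ≤ x s := (hxmono.monotoneOn) (mem_Ici.2 zero_le_one) (mem_Ici.2 hs0) hs.1.le
        have hby : 0 ≤ bt s * y s := mul_nonneg (hbtnn s) (ypos s hs0).le
        nlinarith
    have hkey := hanti2 (left_mem_Icc.2 hM1) (right_mem_Icc.2 hM1) hM1
    have hMeq : lam * x 1 * M = lam * x 1 + (y 1 + 1) := by
      rw [hM]; field_simp
    have hyM := ypos M (by linarith)
    simp only at hkey
    linarith
  -- ### t₁ = first zero of y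
  set Z := {s : ℝ | 0 ≤ s ∧ y s = 0} with hZdef
  have hbdd : BddBelow Z := ⟨0, fun z hz => hz.1⟩
  set t₁ := sInf Z with ht₁def
  have ht₁0 : 0 ≤ t₁ := le_csInf hZne fun z hz => hz.1
  have hyt₁ : y t₁ = 0 := by
    by_contra hne
    have hev := (hycont t₁ ht₁0).eventually_ne hne
    rcases Metric.eventually_nhds_iff.1 hev with ⟨δ, hδ, hball⟩
    obtain ⟨z, hzZ, hzlt⟩ := (csInf_lt_iff hbdd hZne).1 (lt_add_of_pos_right t₁ hδ)
    have hz1 : t₁ ≤ z := csInf_le hbdd hzZ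
    have hdist : dist z t₁ < δ := by
      rw [Real.dist_eq, abs_of_nonneg (by linarith)]
      linarith
    exact (hball hdist) hzZ.2
  have ypos_lt : ∀ s, 0 ≤ s → s < t₁ → 0 < y s := by
    intro s hs hst
    have hns : y s ≠ 0 := fun h => absurd (csInf_le hbdd ⟨hs, h⟩) (not_le.2 hst)
    rcases lt_trichotomy (y s) 0 with h | h | h
    · obtain ⟨r, hr0, hrs, hyr⟩ := hIVT s hs h
      have : t₁ ≤ r := csInf_le hbdd ⟨hr0, hyr⟩
      linarith
    · exact absurd h hns
    · exact h
  have ynn : ∀ s, 0 ≤ s → s ≤ t₁ → 0 ≤ y s := by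
    intro s hs hst
    rcases eq_or_lt_of_le hst with h | h
    · rw [h, hyt₁]
    · exact (ypos_lt s hs h).le
  -- x is nonneg and bounded on [0, t₁]
  have hxmono : MonotoneOn x (Icc 0 t₁) := by
    apply myMonotoneOn (convex_Icc 0 t₁) (fun s hs => hxd s hs.1)
    intro s hs
    rw [interior_Icc] at hs
    exact mul_nonneg hlam.le (ynn s hs.1.le hs.2.le)
  have hxnn : ∀ s, 0 ≤ s → s ≤ t₁ → 0 ≤ x s := by
    intro s hs hst
    have := hxmono (left_mem_Icc.2 ht₁0) ⟨hs, hst⟩ hs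
    rwa [hx0] at this
  -- ### the bound for y on [0, t₁]
  have hganti : AntitoneOn (fun s => y s * Real.exp (D s)) (Icc 0 t₁) := by
    apply myAntitoneOn (convex_Icc 0 t₁)
      (f' := fun s => (-lam * x s - bt s * y s) * Real.exp (D s) + y s * (Real.exp (D s) * bt s))
    · intro s hs
      exact (hyd s hs.1).mul ((hDd s).exp)
    · intro s hs
      rw [interior_Icc] at hs
      have heq : (-lam * x s - bt s * y s) * Real.exp (D s) + y s * (Real.exp (D s) * bt s)
          = -(lam * x s * Real.exp (D s)) := by ring
      rw [heq, neg_nonpos]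
      exact mul_nonneg (mul_nonneg hlam.le (hxnn s hs.1.le hs.2.le)) (Real.exp_pos _).le
  have hD0 : D 0 = 0 := by simp [hD]
  have ybound : ∀ s, 0 ≤ s → s ≤ t₁ → y s ≤ |v₁| * (Real.exp B₀ * (1 + s) ^ (-m)) := by
    intro s hs hst
    have hg := hganti (left_mem_Icc.2 ht₁0) ⟨hs, hst⟩ hs
    simp only [hD0, Real.exp_zero, mul_one, hy0] at hg
    have h1 : y s ≤ |v₁| * Real.exp (-D s) := by
      have h2 : y s = y s * Real.exp (D s) * Real.exp (-D s) := by
        rw [mul_assoc, ← Real.exp_add, add_neg_cancel, Real.exp_zero, mul_one]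
      rw [h2]
      exact mul_le_mul_of_nonneg_right hg (Real.exp_pos _).le
    calc y s ≤ |v₁| * Real.exp (-D s) := h1
      _ ≤ |v₁| * (Real.exp B₀ * (1 + s) ^ (-m)) :=
        mul_le_mul_of_nonneg_left (hDsplit s hs) (abs_nonneg v₁)
  -- ### the bound for x on [0, t₁]
  have xbound : ∀ s, 0 ≤ s → s ≤ t₁ → x s ≤ lam * (|v₁| * Real.exp B₀) * γ s := by
    intro s hs hst
    have hyint : IntervalIntegrable (fun u => lam * y u) MeasureTheory.volume 0 s := by
      apply ContinuousOn.intervalIntegrable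
      rw [uIcc_of_le hs]
      exact continuousOn_const.mul (fun u hu => (hycont u hu.1).continuousWithinAt)
    have hFTC : (∫ u in (0:ℝ)..s, lam * y u) = x s := by
      rw [intervalIntegral.integral_eq_sub_of_hasDerivAt
        (fun u hu => hxd u (by rw [uIcc_of_le hs] at hu; exact hu.1)) hyint, hx0, sub_zero]
    have hint2 : IntervalIntegrable (fun u : ℝ => lam * (|v₁| * Real.exp B₀) * (1 + u) ^ (-m))
        MeasureTheory.volume 0 s := (hγint 0 s le_rfl hs).const_mul _
    have hmono := intervalIntegral.integral_mono_on hs hyint hint2 (by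
      intro u hu
      have h1 := ybound u hu.1 (le_trans hu.2 hst)
      have := mul_le_mul_of_nonneg_left h1 hlam.le
      calc lam * y u ≤ lam * (|v₁| * (Real.exp B₀ * (1 + u) ^ (-m))) := this
        _ = lam * (|v₁| * Real.exp B₀) * (1 + u) ^ (-m) := by ring)
    rw [hFTC] at hmono
    calc x s ≤ ∫ u in (0:ℝ)..s, lam * (|v₁| * Real.exp B₀) * (1 + u) ^ (-m) := hmono
      _ = lam * (|v₁| * Real.exp B₀) * γ s := intervalIntegral.integral_const_mul _ _
  -- ### conclusion
  intro t ht
  constructor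
  · -- part 1
    have h := hρ₁anti (self_mem_Ici) (mem_Ici.2 ht) ht
    rw [hρ₁0] at h
    have hnn : 0 ≤ ρ₁ t := (hρ₁pos t ht).le
    calc ρ₁ t ^ 2 ≤ (lam * |v₀|) ^ 2 := pow_le_pow_left₀ hnn h 2
      _ = lam ^ 2 * v₀ ^ 2 := by rw [mul_pow, sq_abs]
  · -- part 2
    have ea : |v₁| ^ 2 = v₁ ^ 2 := sq_abs v₁
    have eb : Real.exp B₀ ^ 2 = Real.exp (2 * B₀) := by
      rw [sq, ← Real.exp_add]; ring_nf
    have ec : ((1 + t) ^ (-m)) ^ 2 = (1 + t) ^ (-(2 * m)) := by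
      rw [sq, ← Real.rpow_add (h1pos t ht)]; ring_nf
    rcases le_or_gt t t₁ with hcase | hcase
    · -- early phase
      have hyb := ybound t ht hcase
      have hxb := xbound t ht hcase
      have hynn := ynn t ht hcase
      have hxnn' := hxnn t ht hcase
      have h1 : y t ^ 2 ≤ (|v₁| * (Real.exp B₀ * (1 + t) ^ (-m))) ^ 2 := pow_le_pow_left₀ hynn hyb 2
      have h2 : x t ^ 2 ≤ (lam * (|v₁| * Real.exp B₀) * γ t) ^ 2 := pow_le_pow_left₀ hxnn' hxb 2
      rw [hρ₂sq t]
      calc x t ^ 2 + y t ^ 2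
          ≤ (lam * (|v₁| * Real.exp B₀) * γ t) ^ 2
            + (|v₁| * (Real.exp B₀ * (1 + t) ^ (-m))) ^ 2 := add_le_add h2 h1
        _ = Real.exp (2 * B₀) * ((1 + t) ^ (-(2 * m)) + lam ^ 2 * (γ t) ^ 2) * v₁ ^ 2 := by
            rw [← ea, ← eb, ← ec]; ring
    · -- late phase
      have hρle : ρ₂ t ≤ ρ₂ t₁ := hρ₂anti (mem_Ici.2 ht₁0) (mem_Ici.2 ht) hcase.le
      have hxt₁ : x t₁ ≤ lam * (|v₁| * Real.exp B₀) * γ t₁ := xbound t₁ ht₁0 le_rfl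
      have hγle : γ t₁ ≤ γ t := hγmono t₁ t ht₁0 hcase.le
      have hρt₁sq : ρ₂ t₁ ^ 2 = x t₁ ^ 2 := by
        rw [hρ₂sq t₁, hyt₁]; ring
      have hcnn : 0 ≤ lam * (|v₁| * Real.exp B₀) :=
        mul_nonneg hlam.le (mul_nonneg (abs_nonneg _) (Real.exp_pos _).le)
      have step1 : ρ₂ t ^ 2 ≤ (lam * (|v₁| * Real.exp B₀) * γ t) ^ 2 := by
        calc ρ₂ t ^ 2 ≤ ρ₂ t₁ ^ 2 := pow_le_pow_left₀ (hρ₂pos t ht).le hρle 2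
          _ = x t₁ ^ 2 := hρt₁sq
          _ ≤ (lam * (|v₁| * Real.exp B₀) * γ t₁) ^ 2 := pow_le_pow_left₀ (hxnn t₁ ht₁0 le_rfl) hxt₁ 2
          _ ≤ (lam * (|v₁| * Real.exp B₀) * γ t) ^ 2 := by
              apply pow_le_pow_left₀ (mul_nonneg hcnn (hγnn t₁ ht₁0))
              exact mul_le_mul_of_nonneg_left hγle hcnn
      calc ρ₂ t ^ 2 ≤ (lam * (|v₁| * Real.exp B₀) * γ t) ^ 2 := step1
        _ = Real.exp (2 * B₀) * (lam ^ 2 * (γ t) ^ 2) * v₁ ^ 2 := by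
            rw [← ea, ← eb]; ring
        _ ≤ Real.exp (2 * B₀) * ((1 + t) ^ (-(2 * m)) + lam ^ 2 * (γ t) ^ 2) * v₁ ^ 2 := by
            gcongr
            exact le_add_of_nonneg_left (Real.rpow_nonneg (h1pos t ht).le _)
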